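/- Let C ⊆ F_{q^m}^n be a linear rank-metric code of dimension k over F_{q^m} (1 ≤ k ≤ n) with generator matrix G ∈ F_{q^m}^{k×n}. Then C is an MRD code if and only if for every invertible n×n matrix A with entries in F_q, every maximal minor of the matrix G·A (the product computed over F_{q^m}, viewing the entries of A inside F_{q^m}) is non-zero. -/

import Mathlib

open Matrix

/-- The rank over the subfield `Fq` of a vector with entries in `K`:
the `Fq`-dimension of the `Fq`-span of its coordinates. -/
noncomputable def rankQ (Fq : Type) {K : Type} [Field Fq] [Field K] [Algebra Fq K] {n : ℕ}
    (v : Fin n → K) : ℕ :=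
  Module.finrank Fq (Submodule.span Fq (Set.range v))

/-- The minimum rank distance of a linear rank-metric code `C ⊆ K^n`. -/
noncomputable def minRankDist (Fq : Type) {K : Type} [Field Fq] [Field K] [Algebra Fq K] {n : ℕ}
    (C : Submodule K (Fin n → K)) : ℕ :=
  sInf (rankQ Fq '' {c : Fin n → K | c ∈ C ∧ c ≠ 0})

/-- A linear code `C ⊆ K^n` of dimension `k` over `K` is MRD if its minimum
rank distance equals `n - k + 1`. -/
def IsMRD (Fq : Type) {K : Type} [Field Fq] [Field K] [Algebra Fq K] {n : ℕ}
    (C : Submodule K (Fin n → K)) (k : ℕ) : Prop :=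
  Module.finrank K C = k ∧ minRankDist Fq C = n - k + 1

/-- `G` is a generator matrix of `C`: its rows form a `K`-basis of `C`. -/
def IsGenMat {K : Type} [Field K] {k n : ℕ} (C : Submodule K (Fin n → K))
    (G : Matrix (Fin k) (Fin n) K) : Prop :=
  LinearIndependent K (fun i => G i) ∧ Submodule.span K (Set.range fun i => G i) = C

section Aux

variable {Fq K : Type} [Field Fq] [Field K] [Algebra Fq K] {n k : ℕ}

/-- The `Fq`-linear "evaluation" map attached to a vector `c ∈ K^n`. -/
noncomputable def evalMap (Fq : Type) {K : Type} [Field Fq] [Field K] [Algebra Fq K] {n : ℕ}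
    (c : Fin n → K) : (Fin n → Fq) →ₗ[Fq] K :=
  Fintype.linearCombination Fq c

lemma evalMap_apply (c : Fin n → K) (y : Fin n → Fq) :
    evalMap Fq c y = ∑ i, y i • c i := by
  simp [evalMap, Fintype.linearCombination_apply]

lemma rankQ_add_ker (c : Fin n → K) :
    rankQ Fq c + Module.finrank Fq (LinearMap.ker (evalMap Fq c)) = n := by
  have h := LinearMap.finrank_range_add_finrank_ker (evalMap Fq c)
  rw [show LinearMap.range (evalMap Fq c) = _ from Fintype.range_linearCombination Fq c] at h
  simpa [rankQ, Module.finrank_fintype_fun_eq_card] using h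

/-- rank ≤ n - k  iff  there are k independent `Fq`-vectors in the kernel. -/
lemma rankQ_le_iff (c : Fin n → K) (hkn : k ≤ n) :
    rankQ Fq c ≤ n - k ↔
      ∃ y : Fin k → (Fin n → Fq), LinearIndependent Fq y ∧ ∀ j, evalMap Fq c (y j) = 0 := by
  have hrn := rankQ_add_ker (Fq := Fq) c
  constructor
  · intro hr
    have hker : k ≤ Module.finrank Fq (LinearMap.ker (evalMap Fq c)) := by omega
    set d := Module.finrank Fq (LinearMap.ker (evalMap Fq c)) with hd
    have b := Module.finBasis Fq (LinearMap.ker (evalMap Fq c))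
    rw [← hd] at b
    refine ⟨fun j => ((b (Fin.castLE hker j) : LinearMap.ker (evalMap Fq c)) : Fin n → Fq), ?_, ?_⟩
    · have h1 : LinearIndependent Fq (fun j => b (Fin.castLE hker j)) :=
        b.linearIndependent.comp _ (Fin.castLE_injective hker)
      exact h1.map' (LinearMap.ker (evalMap Fq c)).subtype (Submodule.ker_subtype _)
    · intro j
      exact (b (Fin.castLE hker j)).2
  · intro ⟨y, hy, hyk⟩
    have : k ≤ Module.finrank Fq (LinearMap.ker (evalMap Fq c)) := by
      have hy' : LinearIndependent Fq (fun j => (⟨y j, hyk j⟩ : LinearMap.ker (evalMap Fq c))) := by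
        apply LinearIndependent.of_comp (LinearMap.ker (evalMap Fq c)).subtype
        exact hy
      simpa using hy'.fintype_card_le_finrank
    omega

/-- Completion of a linearly independent family to an invertible matrix. -/
lemma exists_complete (y : Fin k → (Fin n → Fq)) (hy : LinearIndependent Fq y) :
    ∃ A : Matrix (Fin n) (Fin n) Fq, IsUnit A.det ∧
      ∃ φ : Fin k → Fin n, Function.Injective φ ∧ ∀ i j, A i (φ j) = y j i := by
  classical
  have hs : LinearIndepOn Fq id (Set.range y) := (linearIndepOn_id_range_iff hy.injective).mpr hy
  let t := hs.extend (Set.subset_univ (Set.range y))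
  let b0 : Module.Basis t Fq (Fin n → Fq) := Module.Basis.extend hs
  haveI : Fintype t := Fintype.ofFinite t
  have hcard : Fintype.card t = n := by
    have := Module.finrank_eq_card_basis b0
    simpa [Module.finrank_fintype_fun_eq_card] using this.symm
  let e : t ≃ Fin n := Fintype.equivFinOfCardEq hcard
  let b := b0.reindex e
  have hmem : ∀ j, y j ∈ t := fun j =>
    hs.subset_extend (Set.subset_univ _) ⟨j, rfl⟩
  refine ⟨(Pi.basisFun Fq (Fin n)).toMatrix b, ?_, fun j => e ⟨y j, hmem j⟩, ?_, ?_⟩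
  · haveI := (Pi.basisFun Fq (Fin n)).invertibleToMatrix b
    exact isUnit_det_of_invertible _
  · intro a b' hab
    have := e.injective hab
    have := congrArg Subtype.val this
    exact hy.injective this
  · intro i j
    rw [Module.Basis.toMatrix_apply, Pi.basisFun_repr, Module.Basis.reindex_apply, Equiv.symm_apply_apply,
      Module.Basis.extend_apply_self]

lemma key_vecMul (G : Matrix (Fin k) (Fin n) K) (x : Fin k → K) (A : Matrix (Fin n) (Fin n) Fq)
    (φ : Fin k → Fin n) (j : Fin k) :
    (x ᵥ* ((G * A.map (algebraMap Fq K)).submatrix id φ)) j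
      = evalMap Fq (x ᵥ* G) (fun i => A i (φ j)) := by
  simp only [vecMul, dotProduct, Matrix.mul_apply, Matrix.submatrix_apply, id_eq,
    Matrix.map_apply, evalMap_apply, Algebra.smul_def, Finset.mul_sum, Finset.sum_mul]
  rw [Finset.sum_comm]
  apply Finset.sum_congr rfl
  intros
  apply Finset.sum_congr rfl
  intros
  ring

lemma vecMul_eq_sum_smul (G : Matrix (Fin k) (Fin n) K) (x : Fin k → K) :
    x ᵥ* G = ∑ i, x i • G i := by
  ext j
  simp [vecMul, dotProduct, Finset.sum_apply]

lemma mem_code {C : Submodule K (Fin n → K)} {G : Matrix (Fin k) (Fin n) K}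
    (hG : IsGenMat C G) {c : Fin n → K} (hc : c ∈ C) :
    ∃ x : Fin k → K, x ᵥ* G = c := by
  rw [← hG.2] at hc
  obtain ⟨x, hx⟩ := (Submodule.mem_span_range_iff_exists_fun K).1 hc
  exact ⟨x, by rw [vecMul_eq_sum_smul, hx]⟩

lemma vecMul_ne_zero {C : Submodule K (Fin n → K)} {G : Matrix (Fin k) (Fin n) K}
    (hG : IsGenMat C G) {x : Fin k → K} (hx : x ≠ 0) : x ᵥ* G ≠ 0 := by
  intro h
  apply hx
  rw [vecMul_eq_sum_smul] at h
  have := Fintype.linearIndependent_iff.1 hG.1 x h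
  funext i; exact this i

/-- Singleton-type bound: there is a nonzero codeword of rank at most `n - k + 1`. -/
lemma exists_low_rank [FiniteDimensional Fq K] {C : Submodule K (Fin n → K)}
    (hdim : Module.finrank K C = k) (hk : 1 ≤ k) (hkn : k ≤ n) :
    ∃ c ∈ C, c ≠ 0 ∧ rankQ Fq c ≤ n - k + 1 := by
  classical
  -- project onto the first k-1 coordinates
  have hk1n : k - 1 ≤ n := by omega
  let π : C →ₗ[K] (Fin (k - 1) → K) :=
    (LinearMap.funLeft K K (fun j : Fin (k - 1) => Fin.castLE hk1n j)).comp C.subtype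
  have hnotinj : ¬ Function.Injective π := by
    intro hinj
    have := LinearMap.finrank_le_finrank_of_injective hinj
    rw [hdim, Module.finrank_fintype_fun_eq_card, Fintype.card_fin] at this
    omega
  have hker : LinearMap.ker π ≠ ⊥ := fun h => hnotinj (LinearMap.ker_eq_bot.1 h)
  obtain ⟨c0, hπ', hne⟩ := (Submodule.ne_bot_iff _).1 hker
  have hπ : π c0 = 0 := hπ' 
  refine ⟨(c0 : Fin n → K), c0.2, fun h => hne (Subtype.ext h), ?_⟩
  -- c0 vanishes on the first k-1 coordinates
  have hvan : ∀ i : Fin n, (i : ℕ) < k - 1 → (c0 : Fin n → K) i = 0 := by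
    intro i hi
    have := congrFun hπ ⟨i, hi⟩
    simpa [π, LinearMap.funLeft, Fin.castLE] using this
  -- embedding of the remaining coordinates
  let emb : Fin (n - (k - 1)) → Fin n := fun t => ⟨(k - 1) + t, by omega⟩
  have hsubset : Set.range (c0 : Fin n → K) ⊆
      insert 0 (Set.range ((c0 : Fin n → K) ∘ emb)) := by
    rintro _ ⟨i, rfl⟩
    by_cases hi : (i : ℕ) < k - 1
    · left; exact hvan i hi
    · right
      refine ⟨⟨(i : ℕ) - (k - 1), by omega⟩, ?_⟩
      have he : emb ⟨(i : ℕ) - (k - 1), by omega⟩ = i := by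
        apply Fin.ext
        simp only [emb]
        omega
      rw [Function.comp_apply, he]
  have hspan : Submodule.span Fq (Set.range (c0 : Fin n → K)) ≤
      Submodule.span Fq (Set.range ((c0 : Fin n → K) ∘ emb)) := by
    have h := Submodule.span_mono (R := Fq) hsubset
    rwa [Submodule.span_insert_zero] at h
  have h1 : rankQ Fq (c0 : Fin n → K) ≤
      Module.finrank Fq (Submodule.span Fq (Set.range ((c0 : Fin n → K) ∘ emb))) :=
    Submodule.finrank_mono hspan
  have h2 : Module.finrank Fq (Submodule.span Fq (Set.range ((c0 : Fin n → K) ∘ emb)))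
      ≤ n - (k - 1) := by
    rw [← Fintype.range_linearCombination Fq (((c0 : Fin n → K)) ∘ emb)]
    have := LinearMap.finrank_range_le (Fintype.linearCombination Fq ((c0 : Fin n → K) ∘ emb))
    simpa [Module.finrank_fintype_fun_eq_card] using this
  have : n - (k - 1) = n - k + 1 := by omega
  omega

end Aux

/-- `C` is MRD iff for every invertible `n × n` matrix `A` over `F_q`,
every maximal minor of `G * A` is non-zero. -/
theorem stmt2 {q m n k : ℕ} (Fq K : Type) [Field Fq] [Fintype Fq] [Field K] [Fintype K]
    [Algebra Fq K] (hq : Fintype.card Fq = q) (hK : Fintype.card K = q ^ m)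
    (hk : 1 ≤ k) (hkn : k ≤ n)
    (C : Submodule K (Fin n → K)) (G : Matrix (Fin k) (Fin n) K) (hG : IsGenMat C G) :
    IsMRD Fq C k ↔
      ∀ A : Matrix (Fin n) (Fin n) Fq, IsUnit A.det →
        ∀ φ : Fin k → Fin n, Function.Injective φ →
          ((G * A.map (algebraMap Fq K)).submatrix id φ).det ≠ 0 := by
  classical
  constructor
  · rintro ⟨hdim, hmin⟩ A hA φ hφ hdet0
    rw [← Matrix.exists_vecMul_eq_zero_iff] at hdet0
    obtain ⟨x, hx0, hxv⟩ := hdet0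
    set c := x ᵥ* G with hc
    have hcC : c ∈ C := by
      rw [← hG.2, hc, vecMul_eq_sum_smul]
      exact Submodule.sum_smul_mem _ _ (fun i _ => Submodule.subset_span ⟨i, rfl⟩)
    have hc0 : c ≠ 0 := vecMul_ne_zero hG hx0
    have hrank : rankQ Fq c ≤ n - k := by
      rw [rankQ_le_iff c hkn]
      refine ⟨fun j i => A i (φ j), ?_, ?_⟩
      · exact (Matrix.linearIndependent_cols_iff_isUnit.2
          ((Matrix.isUnit_iff_isUnit_det A).2 hA)).comp φ hφ
      · intro j
        rw [← key_vecMul, hxv]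
        rfl
    have hsinf : minRankDist Fq C ≤ rankQ Fq c := Nat.sInf_le ⟨c, ⟨hcC, hc0⟩, rfl⟩
    rw [hmin] at hsinf
    omega
  · intro H
    have hdim : Module.finrank K C = k := by
      rw [← hG.2, finrank_span_eq_card hG.1]
      simp
    have hlow : ∀ c ∈ C, c ≠ 0 → n - k + 1 ≤ rankQ Fq c := by
      intro c hcC hc0
      by_contra hlt
      have hle : rankQ Fq c ≤ n - k := by omega
      obtain ⟨y, hy, hyk⟩ := (rankQ_le_iff c hkn).1 hle
      obtain ⟨A, hA, φ, hφ, hcol⟩ := exists_complete y hy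
      obtain ⟨x, hx⟩ := mem_code hG hcC
      have hx0 : x ≠ 0 := by
        rintro rfl
        apply hc0
        rw [← hx, vecMul_eq_sum_smul]
        simp
      apply H A hA φ hφ
      rw [← Matrix.exists_vecMul_eq_zero_iff]
      refine ⟨x, hx0, ?_⟩
      funext j
      rw [Pi.zero_apply, key_vecMul, hx]
      have : (fun i => A i (φ j)) = y j := by
        funext i; exact hcol i j
      rw [this]
      exact hyk j
    obtain ⟨c0, hc0C, hc00, hc0small⟩ := exists_low_rank (Fq := Fq) hdim hk hkn
    have heq : rankQ Fq c0 = n - k + 1 :=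
      le_antisymm hc0small (hlow c0 hc0C hc00)
    refine ⟨hdim, ?_⟩
    apply le_antisymm
    · exact Nat.sInf_le ⟨c0, ⟨hc0C, hc00⟩, heq⟩
    · exact le_csInf ⟨_, ⟨c0, ⟨hc0C, hc00⟩, heq⟩⟩
        (by rintro _ ⟨c, ⟨hc, hcne⟩, rfl⟩; exact hlow c hc hcne)
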